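/- Let A be a 2×2 real matrix with det A = 1 and |tr A| > 2 (so A is hyperbolic, with real eigenvalues σ and σ⁻¹ where |σ| > 1). Let E^u be the eigenline of A for the eigenvalue σ and E^s the eigenline for the eigenvalue σ⁻¹. If θ ∈ ℝ is such that the rotation R_θ maps the line E^u onto the line E^s, then the matrix A·R_θ is elliptic, i.e. |tr(A·R_θ)| < 2 (equivalently, A·R_θ has no real eigenvalues). -/

import Mathlib

open Matrix Real

/-- The rotation matrix of angle `ξ`. -/
noncomputable def rotMat (ξ : ℝ) : Matrix (Fin 2) (Fin 2) ℝ :=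
  !![Real.cos ξ, -Real.sin ξ; Real.sin ξ, Real.cos ξ]

lemma abs_le_of_sq_le_sq'' (x y : ℝ) (h : x^2 ≤ y^2) (hy : 0 ≤ y) : |x| ≤ y := by
  nlinarith [abs_nonneg x, sq_abs x]

set_option maxHeartbeats 1000000

/-- If `A ∈ SL(2,ℝ)` is hyperbolic (`|tr A| > 2`), with eigenvalue `σ`, `|σ| > 1`,
eigenline `ℝu`, and eigenvalue `σ⁻¹` with eigenline `ℝv`, and the rotation `R_θ`
maps the line `ℝu` onto the line `ℝv`, then `A · R_θ` is elliptic: `|tr (A·R_θ)| < 2`. -/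
theorem hyperbolic_mul_rotation_elliptic
    (A : Matrix (Fin 2) (Fin 2) ℝ) (hdet : A.det = 1) (htr : |A.trace| > 2)
    (σ : ℝ) (hσ : |σ| > 1)
    (u v : Fin 2 → ℝ) (hu : u ≠ 0) (hv : v ≠ 0)
    (huEig : A.mulVec u = σ • u) (hvEig : A.mulVec v = σ⁻¹ • v)
    (θ : ℝ) (hrot : ∃ c : ℝ, (rotMat θ).mulVec u = c • v) :
    |(A * rotMat θ).trace| < 2 := by
  obtain ⟨c, hc⟩ := hrot
  set a := A 0 0 with ha
  set b := A 0 1 with hb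
  set cA := A 1 0 with hcA
  set d := A 1 1 with hd
  set u0 := u 0; set u1 := u 1; set v0 := v 0; set v1 := v 1
  set co := Real.cos θ; set s := Real.sin θ
  have hσ0 : σ ≠ 0 := by intro h; rw [h] at hσ; simp at hσ; linarith
  have h1 : a * u0 + b * u1 = σ * u0 := by
    have := congrFun huEig 0
    simpa [Matrix.mulVec, dotProduct, Fin.sum_univ_two] using this
  have h2 : cA * u0 + d * u1 = σ * u1 := by
    have := congrFun huEig 1
    simpa [Matrix.mulVec, dotProduct, Fin.sum_univ_two] using this
  have h3' : a * v0 + b * v1 = σ⁻¹ * v0 := by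
    have := congrFun hvEig 0
    simpa [Matrix.mulVec, dotProduct, Fin.sum_univ_two] using this
  have h4' : cA * v0 + d * v1 = σ⁻¹ * v1 := by
    have := congrFun hvEig 1
    simpa [Matrix.mulVec, dotProduct, Fin.sum_univ_two] using this
  have h3 : σ * (a * v0 + b * v1) = v0 := by rw [h3']; field_simp
  have h4 : σ * (cA * v0 + d * v1) = v1 := by rw [h4']; field_simp
  have h5 : co * u0 - s * u1 = c * v0 := by
    have := congrFun hc 0
    simpa [Matrix.mulVec, dotProduct, rotMat, Fin.sum_univ_two, sub_eq_add_neg,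
      mul_comm] using this
  have h6 : s * u0 + co * u1 = c * v1 := by
    have := congrFun hc 1
    simpa [Matrix.mulVec, dotProduct, rotMat, Fin.sum_univ_two] using this
  have hdet' : a * d - b * cA = 1 := by
    have := hdet
    rw [Matrix.det_fin_two] at this
    linarith [this]
  -- trace of A : σ*(a+d) = σ^2 + 1
  have hq0 : (σ^2 - σ*(a+d) + 1) * u0 = 0 := by
    linear_combination (d - σ) * h1 + (-b) * h2 + (-u0) * hdet'
  have hq1 : (σ^2 - σ*(a+d) + 1) * u1 = 0 := by
    linear_combination (-cA) * h1 + (a - σ) * h2 + (-u1) * hdet'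
  have hune : u0 ≠ 0 ∨ u1 ≠ 0 := by
    by_contra h
    push_neg at h
    exact hu (funext fun i => by fin_cases i <;> first | exact h.1 | exact h.2)
  have h9 : σ * (a + d) = σ^2 + 1 := by
    rcases hune with h | h
    · have := mul_eq_zero.mp hq0
      rcases this with h' | h'
      · linarith
      · exact absurd h' h
    · have := mul_eq_zero.mp hq1
      rcases this with h' | h'
      · linarith
      · exact absurd h' h
  -- trace of A * R
  have hT : (A * rotMat θ).trace = co * (a + d) + s * (b - cA) := by
    simp [Matrix.trace, Matrix.mul_apply, rotMat, Fin.sum_univ_two, Matrix.diag]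
    ring
  set T := co * (a + d) + s * (b - cA) with hTdef
  set N := u0^2 + u1^2 with hN
  set M := v0^2 + v1^2 with hM
  set I := u0*v0 + u1*v1 with hI
  -- key identity
  have key : σ * N * T = 2 * c * I := by
    rw [hTdef, hN, hI]
    linear_combination (c*u0) * h3 + (c*u1) * h4
      + (σ*(u0*a + u1*cA + u0*d - u1*b)) * h5
      + (σ*(u0*b + u1*d + u1*a - u0*cA)) * h6
      + (c*(u0*v0+u1*v1)) * h9 + (-c*σ*v0) * h1 + (-c*σ*v1) * h2
  have hsc : s^2 + co^2 = 1 := sin_sq_add_cos_sq θ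
  have hc2 : c^2 * M = N := by
    rw [hM, hN]
    linear_combination (-(c*v0 + co*u0 - s*u1)) * h5 + (-(c*v1 + s*u0 + co*u1)) * h6
      + (u0^2 + u1^2) * hsc
  have hNpos : 0 < N := by
    rcases hune with h | h <;> positivity
  have hMpos : 0 < M := by
    have hvne : v0 ≠ 0 ∨ v1 ≠ 0 := by
      by_contra h
      push_neg at h
      exact hv (funext fun i => by fin_cases i <;> first | exact h.1 | exact h.2)
    rcases hvne with h | h <;> positivity
  have hCS : I^2 ≤ N * M := by
    have hid : N * M - I^2 = (u0*v1 - u1*v0)^2 := by rw [hN, hM, hI]; ring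
    linarith [sq_nonneg (u0*v1 - u1*v0), hid]
  have hIle : |I| ≤ |c| * M := by
    have h1 : I^2 ≤ (|c| * M)^2 := by
      have : (|c| * M)^2 = c^2 * M * M := by rw [mul_pow, sq_abs]; ring
      rw [this, hc2]; exact hCS
    exact abs_le_of_sq_le_sq'' I (|c| * M) h1 (mul_nonneg (abs_nonneg c) hMpos.le)
  have keyabs : |σ| * N * |T| = 2 * |c| * |I| := by
    have := congrArg abs key
    rw [abs_mul, abs_mul, abs_mul, abs_mul, abs_of_pos hNpos] at this
    simpa [abs_two] using this
  have hfin : |σ| * N * |T| ≤ 2 * N := by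
    rw [keyabs]
    calc 2 * |c| * |I| ≤ 2 * |c| * (|c| * M) := by
          apply mul_le_mul_of_nonneg_left hIle
          positivity
      _ = 2 * (c^2 * M) := by rw [← sq_abs c]; ring
      _ = 2 * N := by rw [hc2]
  have hTle : |σ| * |T| ≤ 2 := by
    have h' : (|σ| * |T|) * N ≤ 2 * N := by linarith [hfin, mul_assoc (|σ|) (|T|) N, mul_comm (|T|) N, mul_assoc (|σ|) N (|T|)]
    exact le_of_mul_le_mul_right h' hNpos
  rw [hT]
  by_contra hcon
  push_neg at hcon
  have h2σ : 2 * |σ| ≤ |T| * |σ| := mul_le_mul_of_nonneg_right hcon (abs_nonneg σ)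
  have : |T| * |σ| ≤ 2 := by linarith [hTle, mul_comm (|σ|) (|T|)]
  nlinarith [hσ]
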